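/- Let F be a field, let A, B ∈ F, and let (y_n)_{n≥0} be a sequence of nonzero elements of F satisfying y_{n+1}·y_{n+2}²·y_{n+3}²·y_{n+4} = −(y_n·y_{n+1}²·y_{n+2}²·y_{n+3} + A·y_{n+1}·y_{n+2}·y_{n+3} + B) for all n ≥ 0. Define H1(w1, w2, w3, w4) := (A² + B)·w1·w2²·w3²·w4 + A·B·w2·w3·(w1 + w4) + A·w1·w2³·w3³·w4·(w1 + w4) + (w1·w2²·w3²·w4)² and H2(w1, w2, w3, w4) := A·(w2 + w3) − B/(w2·w3) + w2·w3·(w1·w2 − w1·w4 + w3·w4). Then both H1 and H2 are invariants of the map: H1(y_{n+1}, y_{n+2}, y_{n+3}, y_{n+4}) = H1(y_n, y_{n+1}, y_{n+2}, y_{n+3}) and H2(y_{n+1}, y_{n+2}, y_{n+3}, y_{n+4}) = H2(y_n, y_{n+1}, y_{n+2}, y_{n+3}) for all n ≥ 0. -/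

import Mathlib

/-- The first (polynomial) integral `H1` of the fourth-order map (del). -/
def quadMapH1 {F : Type*} [Field F] (A B : F) (w1 w2 w3 w4 : F) : F :=
  (A ^ 2 + B) * w1 * w2 ^ 2 * w3 ^ 2 * w4 + A * B * w2 * w3 * (w1 + w4) +
    A * w1 * w2 ^ 3 * w3 ^ 3 * w4 * (w1 + w4) + (w1 * w2 ^ 2 * w3 ^ 2 * w4) ^ 2

/-- The second integral `H2` of the fourth-order map (del). -/
noncomputable def quadMapH2 {F : Type*} [Field F] (A B : F) (w1 w2 w3 w4 : F) : F :=
  A * (w2 + w3) - B / (w2 * w3) + w2 * w3 * (w1 * w2 - w1 * w4 + w3 * w4)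

lemma aux18 {F : Type*} [Field F] (A B a b c d e : F)
    (hb : b ≠ 0) (hc : c ≠ 0) (hd : d ≠ 0)
    (hrec : b * c ^ 2 * d ^ 2 * e = -(a * b ^ 2 * c ^ 2 * d + A * b * c * d + B)) :
    quadMapH1 A B b c d e = quadMapH1 A B a b c d ∧
    quadMapH2 A B b c d e = quadMapH2 A B a b c d := by
  have h : b * c ^ 2 * d ^ 2 * e + (a * b ^ 2 * c ^ 2 * d + A * b * c * d + B) = 0 := by
    linear_combination hrec
  unfold quadMapH1 quadMapH2
  constructor
  · linear_combination ((A * c * d + b * c ^ 2 * d ^ 2) * e - a * b * c * (A + b * c * d)) * h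
  · field_simp
    linear_combination (d - b) * h

/-- for any nonvanishing solution of the fourth-order recurrence
`y (n+1) y (n+2)² y (n+3)² y (n+4)
= -(y n y (n+1)² y (n+2)² y (n+3) + A y (n+1) y (n+2) y (n+3) + B)`,
both `H1` and `H2` are invariants. -/
theorem stmt_18 {F : Type*} [Field F] (A B : F) (y : ℕ → F)
    (hne : ∀ n : ℕ, y n ≠ 0)
    (hrec : ∀ n : ℕ,
      y (n + 1) * y (n + 2) ^ 2 * y (n + 3) ^ 2 * y (n + 4) =
        -(y n * y (n + 1) ^ 2 * y (n + 2) ^ 2 * y (n + 3) +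
            A * y (n + 1) * y (n + 2) * y (n + 3) + B)) :
    ∀ n : ℕ,
      quadMapH1 A B (y (n + 1)) (y (n + 2)) (y (n + 3)) (y (n + 4)) =
          quadMapH1 A B (y n) (y (n + 1)) (y (n + 2)) (y (n + 3)) ∧
      quadMapH2 A B (y (n + 1)) (y (n + 2)) (y (n + 3)) (y (n + 4)) =
          quadMapH2 A B (y n) (y (n + 1)) (y (n + 2)) (y (n + 3)) := by
  intro n
  exact aux18 A B (y n) (y (n + 1)) (y (n + 2)) (y (n + 3)) (y (n + 4))
    (hne _) (hne _) (hne _) (hrec n)
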